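/- Let s ≥ 2 be an integer, G a graph with ω(G) ≤ s, and X a clique of G. If G' is an (s − 1; X)-degenerate induced subgraph of G, then for every vertex x of G − G', the subgraph induced by V(G') ∪ {x} is (s; X)-degenerate in G. -/

import Mathlib

/-- Degree of `u` within the induced subgraph on the vertex set `A`. -/
def degIn {V : Type*} [Fintype V] [DecidableEq V] (G : SimpleGraph V)
    [DecidableRel G.Adj] (A : Finset V) (u : V) : ℕ :=
  (G.neighborFinset u ∩ A).card

/-- The induced subgraph on `A` is non-complete. -/
def NonCompleteOn {V : Type*} (G : SimpleGraph V) (A : Finset V) : Prop :=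
  ∃ u ∈ A, ∃ v ∈ A, u ≠ v ∧ ¬G.Adj u v

/-- The induced subgraph on `H` is `(s; X)`-feasible in `G`. -/
def Feasible {V : Type*} [Fintype V] [DecidableEq V] (G : SimpleGraph V)
    [DecidableRel G.Adj] (s : ℕ) (X H : Finset V) : Prop :=
  (∀ u ∈ H, u ∉ X → s < degIn G H u) ∧
  (∀ u ∈ H, u ∉ X → ∀ v ∈ H, v ∈ X → ¬G.Adj u v → 2 * s < degIn G H u + degIn G H v) ∧
  NonCompleteOn G H

/-- The induced subgraph on `A` is `(s; X)`-degenerate in `G`. -/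
def Degenerate {V : Type*} [Fintype V] [DecidableEq V] (G : SimpleGraph V)
    [DecidableRel G.Adj] (s : ℕ) (X A : Finset V) : Prop :=
  NonCompleteOn G A ∧ ∀ H ⊆ A, ¬Feasible G s X H

lemma clique_card_le {V : Type*} [Fintype V] [DecidableEq V] (G : SimpleGraph V)
    {s : ℕ} (hω : G.CliqueFree (s + 1)) {T : Finset V} (hT : G.IsClique (T : Set V)) :
    T.card ≤ s := by
  by_contra h
  push_neg at h
  obtain ⟨T', hT', hcard⟩ := Finset.exists_subset_card_eq h
  exact hω T' ⟨hT.subset (by exact_mod_cast hT'), hcard⟩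

theorem stmt_8 {V : Type*} [Fintype V] [DecidableEq V]
    (G : SimpleGraph V) [DecidableRel G.Adj] (s : ℕ) (hs : 2 ≤ s)
    (hω : G.CliqueFree (s + 1)) (X : Finset V) (hX : G.IsClique (X : Set V))
    (A : Finset V) (hdeg : Degenerate G (s - 1) X A) (x : V) (hx : x ∉ A) :
    Degenerate G s X (insert x A) := by
  obtain ⟨⟨a, ha, b, hb, hab, hnadj⟩, hnd⟩ := hdeg
  refine ⟨⟨a, Finset.mem_insert_of_mem ha, b, Finset.mem_insert_of_mem hb, hab, hnadj⟩, ?_⟩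
  intro H hH hF
  obtain ⟨h1, h2, h3⟩ := hF
  set H' := H.erase x with hH'def
  have hH'A : H' ⊆ A := by
    intro c hc
    obtain ⟨hcx, hcH⟩ := Finset.mem_erase.mp hc
    rcases Finset.mem_insert.mp (hH hcH) with h | h
    · exact absurd h hcx
    · exact h
  have key : ∀ u ∈ H', degIn G H u ≤ degIn G H' u + 1 := by
    intro u _
    have heq : G.neighborFinset u ∩ H' = (G.neighborFinset u ∩ H).erase x := by
      ext c
      simp only [hH'def, Finset.mem_inter, Finset.mem_erase]
      tauto
    unfold degIn
    rw [heq]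
    by_cases hxm : x ∈ G.neighborFinset u ∩ H
    · have := Finset.card_erase_add_one hxm
      omega
    · rw [Finset.erase_eq_of_notMem hxm]
      omega
  apply hnd H' hH'A
  refine ⟨?_, ?_, ?_⟩
  · intro u hu huX
    have h := h1 u (Finset.mem_of_mem_erase hu) huX
    have := key u hu
    omega
  · intro u hu huX v hv hvX hadj
    have h := h2 u (Finset.mem_of_mem_erase hu) huX v (Finset.mem_of_mem_erase hv) hvX hadj
    have k1 := key u hu; have k2 := key v hv
    omega
  · by_contra hcomp
    unfold NonCompleteOn at hcomp
    push_neg at hcomp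
    have hclique : G.IsClique (H' : Set V) := by
      intro u hu v hv huv
      exact hcomp u hu v hv huv
    have hcard : H'.card ≤ s := clique_card_le G hω hclique
    -- get a nonadjacent pair involving x
    obtain ⟨u, hu, v, hv, huv, hnad⟩ := h3
    have hy : ∃ y ∈ H, y ≠ x ∧ ¬G.Adj x y := by
      by_cases hux : u = x
      · exact ⟨v, hv, fun h => huv (hux.trans h.symm), hux ▸ hnad⟩
      by_cases hvx : v = x
      · exact ⟨u, hu, hux, fun h => hnad (hvx ▸ h.symm)⟩
      · exact absurd (hcomp u (Finset.mem_erase.mpr ⟨hux, hu⟩) v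
          (Finset.mem_erase.mpr ⟨hvx, hv⟩) huv) hnad
    obtain ⟨y, hyH, hyx, hxy⟩ := hy
    have hxH : x ∈ H := by
      by_cases hux : u = x
      · exact hux ▸ hu
      by_cases hvx : v = x
      · exact hvx ▸ hv
      · exact absurd (hcomp u (Finset.mem_erase.mpr ⟨hux, hu⟩) v
          (Finset.mem_erase.mpr ⟨hvx, hv⟩) huv) hnad
    -- pick z ∈ H, z ∉ X with N z ∩ H ⊆ H'
    obtain ⟨z, hzH, hzX, hzsub⟩ :
        ∃ z ∈ H, z ∉ X ∧ G.neighborFinset z ∩ H ⊆ H' := by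
      by_cases hxX : x ∈ X
      · refine ⟨y, hyH, fun hyX => hxy (hX hxX hyX (Ne.symm hyx)), ?_⟩
        intro c hc
        obtain ⟨hcN, hcH⟩ := Finset.mem_inter.mp hc
        refine Finset.mem_erase.mpr ⟨?_, hcH⟩
        intro hcx
        have hadj : G.Adj y c := (G.mem_neighborFinset y c).mp hcN
        rw [hcx] at hadj
        exact hxy hadj.symm
      · refine ⟨x, hxH, hxX, ?_⟩
        intro c hc
        obtain ⟨hcN, hcH⟩ := Finset.mem_inter.mp hc
        refine Finset.mem_erase.mpr ⟨?_, hcH⟩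
        intro hcx
        have hadj : G.Adj x c := (G.mem_neighborFinset x c).mp hcN
        rw [hcx] at hadj
        exact G.loopless.irrefl x hadj
    have hdz := h1 z hzH hzX
    have : degIn G H z ≤ H'.card := Finset.card_le_card hzsub
    unfold degIn at hdz this
    omega
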